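/- The function f(x) = x²/2 − l_{p,c}(x) is convex on ℝ, where l_{p,c} is the HOP function. -/

import Mathlib

/-- The hybrid ordinary-ℓp (HOP) function with parameters `0 < p ≤ 1`, `c > 0`. -/
noncomputable def hop (p c x : ℝ) : ℝ :=
  if |x| ≤ c then x ^ 2 / 2
  else (1 / p) * c ^ ((2 : ℝ) - p) * |x| ^ p + c ^ 2 / 2 - c ^ 2 / p

section Aux

variable (p c : ℝ)

/-- Auxiliary function: the outer convex function. -/
noncomputable def hopAuxQ (t : ℝ) : ℝ :=
  t ^ 2 / 2 - (1 / p) * c ^ ((2 : ℝ) - p) * t ^ p - c ^ 2 / 2 + c ^ 2 / p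

lemma hopAuxQ_convexOn (hp : 0 < p) (hp1 : p ≤ 1) (hc : 0 < c) :
    ConvexOn ℝ (Set.Ici (0 : ℝ)) (hopAuxQ p c) := by
  have h1 : ConvexOn ℝ (Set.Ici (0 : ℝ)) (fun t : ℝ => t ^ 2 / 2) := by
    have h := (convexOn_pow 2).smul (by norm_num : (0:ℝ) ≤ 1/2)
    convert h using 2 with t
    any_goals rfl
    simp [smul_eq_mul]
    ring
  have h2 : ConvexOn ℝ (Set.Ici (0 : ℝ))
      (fun t : ℝ => -((1 / p) * c ^ ((2 : ℝ) - p) * t ^ p)) := by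
    have hcoef : (0:ℝ) ≤ (1 / p) * c ^ ((2 : ℝ) - p) := by positivity
    have h := ((Real.concaveOn_rpow hp.le hp1).smul hcoef).neg
    have heq2 : (fun t : ℝ => -((1 / p) * c ^ ((2 : ℝ) - p) * t ^ p))
        = -(((1 / p) * c ^ ((2 : ℝ) - p)) • fun t : ℝ => t ^ p) := by
      funext t
      simp only [Pi.neg_apply, Pi.smul_apply, smul_eq_mul]
    rw [heq2]
    exact h
  have h := (h1.add h2).add_const (-(c ^ 2 / 2) + c ^ 2 / p)
  have heq : hopAuxQ p c = ((fun t : ℝ => t ^ 2 / 2) +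
      fun t : ℝ => -((1 / p) * c ^ ((2 : ℝ) - p) * t ^ p))
      + fun _ : ℝ => -(c ^ 2 / 2) + c ^ 2 / p := by
    funext t
    simp only [Pi.add_apply, hopAuxQ]
    ring
  rw [heq]
  exact h

lemma hopAuxQ_monotoneOn (hp : 0 < p) (hp1 : p ≤ 1) (hc : 0 < c) :
    MonotoneOn (hopAuxQ p c) (Set.Ici c) := by
  have hderiv : ∀ t ∈ Set.Ioi c, HasDerivAt (hopAuxQ p c)
      (t - c ^ ((2 : ℝ) - p) * t ^ (p - 1)) t := by
    intro t ht
    have ht0 : 0 < t := hc.trans ht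
    have h1 : HasDerivAt (fun t : ℝ => t ^ 2 / 2) t t := by
      simpa using ((hasDerivAt_pow 2 t).div_const 2)
    have h2 : HasDerivAt (fun t : ℝ => t ^ p) (p * t ^ (p - 1)) t :=
      Real.hasDerivAt_rpow_const (Or.inl ht0.ne')
    have h3 := h2.const_mul ((1 / p) * c ^ ((2 : ℝ) - p))
    have h4 := (h1.sub h3).add_const (-(c ^ 2 / 2) + c ^ 2 / p)
    have heq : (1 / p) * c ^ ((2 : ℝ) - p) * (p * t ^ (p - 1))
        = c ^ ((2 : ℝ) - p) * t ^ (p - 1) := by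
      field_simp
    rw [heq] at h4
    convert h4 using 1
    any_goals rfl
    funext s; unfold hopAuxQ; simp only [Pi.sub_apply]; ring
  refine monotoneOn_of_deriv_nonneg (convex_Ici c) ?_ ?_ ?_
  · intro t ht
    have ht0 : 0 < t := lt_of_lt_of_le hc ht
    have hr : ContinuousAt (fun t : ℝ => t ^ p) t :=
      Real.continuousAt_rpow_const t p (Or.inl ht0.ne')
    have : ContinuousAt (hopAuxQ p c) t := by
      unfold hopAuxQ
      fun_prop
    exact this.continuousWithinAt
  · rw [interior_Ici]
    intro t ht
    exact ((hderiv t ht).differentiableAt).differentiableWithinAt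
  · rw [interior_Ici]
    intro t ht
    rw [(hderiv t ht).deriv]
    have ht0 : 0 < t := hc.trans ht
    have h1 : c ^ ((2 : ℝ) - p) ≤ t ^ ((2 : ℝ) - p) :=
      Real.rpow_le_rpow hc.le (le_of_lt ht) (by linarith)
    have h2 : t ^ ((2 : ℝ) - p) * t ^ (p - 1) = t := by
      rw [← Real.rpow_add ht0]
      norm_num
    have h3 : c ^ ((2 : ℝ) - p) * t ^ (p - 1) ≤ t := by
      calc c ^ ((2 : ℝ) - p) * t ^ (p - 1)
          ≤ t ^ ((2 : ℝ) - p) * t ^ (p - 1) :=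
            mul_le_mul_of_nonneg_right h1 (Real.rpow_nonneg ht0.le _)
        _ = t := h2
    linarith

end Aux

/-- `x ↦ x²/2 − l_{p,c}(x)` is convex on ℝ, where `l_{p,c}` is HOP. -/
theorem hop_quadratic_minus_convex (p c : ℝ) (hp : 0 < p) (hp1 : p ≤ 1) (hc : 0 < c) :
    ConvexOn ℝ Set.univ (fun x : ℝ => x ^ 2 / 2 - hop p c x) := by
  have himg : (fun x : ℝ => max |x| c) '' Set.univ = Set.Ici c := by
    ext t
    simp only [Set.image_univ, Set.mem_range, Set.mem_Ici]
    constructor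
    · rintro ⟨x, rfl⟩; exact le_max_right _ _
    · intro ht
      refine ⟨t, ?_⟩
      have htpos : 0 ≤ t := hc.le.trans ht
      rw [abs_of_nonneg htpos, max_eq_left ht]
  have hm : ConvexOn ℝ Set.univ (fun x : ℝ => max |x| c) := by
    have habs : ConvexOn ℝ Set.univ (fun x : ℝ => |x|) := by
      exact convexOn_univ_norm (E := ℝ)
    exact habs.sup (convexOn_const c convex_univ)
  have hq : ConvexOn ℝ ((fun x : ℝ => max |x| c) '' Set.univ) (hopAuxQ p c) := by
    rw [himg]
    exact (hopAuxQ_convexOn p c hp hp1 hc).subset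
      (Set.Ici_subset_Ici.mpr hc.le) (convex_Ici c)
  have hmono : MonotoneOn (hopAuxQ p c) ((fun x : ℝ => max |x| c) '' Set.univ) := by
    rw [himg]
    exact hopAuxQ_monotoneOn p c hp hp1 hc
  have hcomp := hq.comp hm hmono
  have h2c : c ^ ((2 : ℝ) - p) * c ^ p = c ^ 2 := by
    rw [← Real.rpow_add hc, show (2:ℝ) - p + p = 2 by ring,
      show (2:ℝ) = ((2:ℕ):ℝ) by norm_num, Real.rpow_natCast]
  have hqc : hopAuxQ p c c = 0 := by
    unfold hopAuxQ
    rw [mul_assoc, h2c]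
    ring
  have hfeq : (fun x : ℝ => x ^ 2 / 2 - hop p c x)
      = (hopAuxQ p c) ∘ (fun x : ℝ => max |x| c) := by
    funext x
    simp only [Function.comp]
    unfold hop
    by_cases hx : |x| ≤ c
    · rw [if_pos hx, max_eq_right hx, hqc]
      ring
    · push_neg at hx
      rw [if_neg (not_le.mpr hx), max_eq_left hx.le]
      unfold hopAuxQ
      rw [sq_abs]
      ring
  rw [hfeq]
  exact hcomp
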